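/- Let G = (V, E) be a graph with a linear order < on E and let f be a function from subsets of E into a commutative monoid. Then Σ_{F = (V,A_f) spanning forest} Σ_{A_i ⊆ E_i(F)} Σ_{A_e ⊆ E_e(F)} f((A_f \ A_i) ∪ A_e) = Σ_{A ⊆ E} f(A). -/

import Mathlib

open Finset

attribute [local instance] Classical.propDecidable

/-- A multigraph on vertex type `V` with edge index type `E` is given by a map
`ends : E → Sym2 V` (loops and parallel edges are allowed).  For an edge subset
`A ⊆ E`, `edgeGraph ends A` is the simple graph on `V` whose adjacency is
witnessed by some edge of `A`; it determines the connected components of the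
spanning subgraph `(V, A)`. -/
def edgeGraph {V E : Type} (ends : E → Sym2 V) (A : Finset E) : SimpleGraph V where
  Adj a b := a ≠ b ∧ ∃ e ∈ A, ends e = s(a, b)
  symm := by
    constructor
    rintro a b ⟨hab, e, he, hs⟩
    exact ⟨Ne.symm hab, e, he, by rw [hs, Sym2.eq_swap]⟩
  loopless := by constructor; rintro a ⟨h, -⟩; exact h rfl

/-- `kc ends A` is the number of connected components of the spanning subgraph `(V, A)`. -/
noncomputable def kc {V E : Type} (ends : E → Sym2 V) (A : Finset E) : ℕ :=
  Nat.card (edgeGraph ends A).ConnectedComponent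

/-- `(V, A)` is a spanning forest of `(V, E)`: it is a forest
(`|A| + k((V,A)) = |V|`, which rules out loops, parallel edges and cycles)
with as many connected components as the whole graph. -/
def IsSpanningForest {V E : Type} [Fintype V] [Fintype E] (ends : E → Sym2 V)
    (A : Finset E) : Prop :=
  A.card + kc ends A = Fintype.card V ∧ kc ends A = kc ends Finset.univ

/-- `F - e + f`. -/
def swapEdge {E : Type} [DecidableEq E] (A : Finset E) (e f : E) : Finset E :=
  insert f (A.erase e)

/-- `e` is internally active in the spanning forest `(V, A)`. -/
def InternallyActive {V E : Type} [Fintype V] [Fintype E] [DecidableEq E] [LinearOrder E]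
    (ends : E → Sym2 V) (A : Finset E) (e : E) : Prop :=
  e ∈ A ∧ ¬ ∃ f, f ∉ A ∧ e < f ∧ IsSpanningForest ends (swapEdge A e f)

/-- `f` is externally active in the spanning forest `(V, A)`. -/
def ExternallyActive {V E : Type} [Fintype V] [Fintype E] [DecidableEq E] [LinearOrder E]
    (ends : E → Sym2 V) (A : Finset E) (f : E) : Prop :=
  f ∉ A ∧ ¬ ∃ e, e ∈ A ∧ f < e ∧ IsSpanningForest ends (swapEdge A e f)

/-- The set `E_i(F)` of internally active edges of the spanning forest `F = (V, A)`. -/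
noncomputable def intAct {V E : Type} [Fintype V] [Fintype E] [DecidableEq E] [LinearOrder E]
    (ends : E → Sym2 V) (A : Finset E) : Finset E :=
  Finset.univ.filter (InternallyActive ends A)

/-- The set `E_e(F)` of externally active edges of the spanning forest `F = (V, A)`. -/
noncomputable def extAct {V E : Type} [Fintype V] [Fintype E] [DecidableEq E] [LinearOrder E]
    (ends : E → Sym2 V) (A : Finset E) : Finset E :=
  Finset.univ.filter (ExternallyActive ends A)


set_option linter.unusedSectionVars false
set_option maxHeartbeats 1000000

section Graph

variable {V E : Type} [DecidableEq E] (ends : E → Sym2 V) {A B : Finset E}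

lemma edgeGraph_mono (h : A ⊆ B) : edgeGraph ends A ≤ edgeGraph ends B := by
  rintro a b ⟨hab, e, he, hs⟩
  exact ⟨hab, e, h he, hs⟩

lemma reachable_mono (h : A ⊆ B) {u v : V}
    (hr : (edgeGraph ends A).Reachable u v) : (edgeGraph ends B).Reachable u v :=
  hr.map (SimpleGraph.Hom.ofLE (edgeGraph_mono ends h))

lemma ends_exists (e : E) : ∃ a b : V, ends e = s(a, b) := by
  induction (ends e) using Sym2.ind with
  | _ a b => exact ⟨a, b, rfl⟩

lemma reachable_insert_iff {e : E} {a b : V} (hab : ends e = s(a, b)) {u v : V} :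
    (edgeGraph ends (insert e A)).Reachable u v ↔
      (edgeGraph ends A).Reachable u v ∨
      ((edgeGraph ends A).Reachable u a ∧ (edgeGraph ends A).Reachable b v) ∨
      ((edgeGraph ends A).Reachable u b ∧ (edgeGraph ends A).Reachable a v) := by
  constructor
  · intro h
    obtain ⟨w⟩ := h
    induction w with
    | nil => exact Or.inl (SimpleGraph.Reachable.refl _)
    | @cons x y z hadj p ih =>
      obtain ⟨hxy, e', he', hs⟩ := hadj
      rcases Finset.mem_insert.mp he' with rfl | he'A
      · rw [hab] at hs
        have hcase : (a = x ∧ b = y) ∨ (a = y ∧ b = x) := by rwa [Sym2.eq_iff] at hs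
        rcases hcase with ⟨rfl, rfl⟩ | ⟨rfl, rfl⟩
        · rcases ih with h1 | ⟨h1, h2⟩ | ⟨h1, h2⟩
          · exact Or.inr (Or.inl ⟨SimpleGraph.Reachable.refl _, h1⟩)
          · exact Or.inl (h1.symm.trans h2)
          · exact Or.inl h2
        · rcases ih with h1 | ⟨h1, h2⟩ | ⟨h1, h2⟩
          · exact Or.inr (Or.inr ⟨SimpleGraph.Reachable.refl _, h1⟩)
          · exact Or.inl h2
          · exact Or.inl (h1.symm.trans h2)
      · have hxyA : (edgeGraph ends A).Reachable x y :=
          SimpleGraph.Adj.reachable ⟨hxy, e', he'A, hs⟩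
        rcases ih with h1 | ⟨h1, h2⟩ | ⟨h1, h2⟩
        · exact Or.inl (hxyA.trans h1)
        · exact Or.inr (Or.inl ⟨hxyA.trans h1, h2⟩)
        · exact Or.inr (Or.inr ⟨hxyA.trans h1, h2⟩)
  · have hmono : ∀ {x y : V}, (edgeGraph ends A).Reachable x y →
        (edgeGraph ends (insert e A)).Reachable x y :=
      fun h => reachable_mono ends (Finset.subset_insert e A) h
    rintro (h1 | ⟨h1, h2⟩ | ⟨h1, h2⟩)
    · exact hmono h1
    · by_cases hab' : a = b
      · subst hab'; exact hmono (h1.trans h2)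
      · have : (edgeGraph ends (insert e A)).Adj a b :=
          ⟨hab', e, Finset.mem_insert_self e A, hab⟩
        exact (hmono h1).trans (this.reachable.trans (hmono h2))
    · by_cases hab' : a = b
      · subst hab'; exact hmono (h1.trans h2)
      · have : (edgeGraph ends (insert e A)).Adj b a :=
          ⟨fun hh => hab' hh.symm, e, Finset.mem_insert_self e A, by rw [hab, Sym2.eq_swap]⟩
        exact (hmono h1).trans (this.reachable.trans (hmono h2))

variable [Fintype V]

noncomputable instance (A : Finset E) : Fintype (edgeGraph ends A).ConnectedComponent :=
  Fintype.ofFinite _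

lemma kc_le_of_subset (h : A ⊆ B) : kc ends B ≤ kc ends A := by
  apply Nat.card_le_card_of_surjective
    (SimpleGraph.ConnectedComponent.map
      (SimpleGraph.Hom.ofLE (edgeGraph_mono ends h)))
  intro c'
  induction c' using SimpleGraph.ConnectedComponent.ind with
  | _ v => exact ⟨(edgeGraph ends A).connectedComponentMk v, rfl⟩

lemma kc_eq_of_reachable_imp (h : A ⊆ B)
    (hr : ∀ u v : V, (edgeGraph ends B).Reachable u v → (edgeGraph ends A).Reachable u v) :
    kc ends B = kc ends A := by
  apply (Nat.card_eq_of_bijective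
    (SimpleGraph.ConnectedComponent.map
      (SimpleGraph.Hom.ofLE (edgeGraph_mono ends h))) ?_).symm
  constructor
  · intro c₁ c₂
    induction c₁ using SimpleGraph.ConnectedComponent.ind with
    | _ u =>
      induction c₂ using SimpleGraph.ConnectedComponent.ind with
      | _ v =>
        intro hc
        simp only [SimpleGraph.ConnectedComponent.map_mk] at hc
        exact SimpleGraph.ConnectedComponent.sound
          (hr u v (SimpleGraph.ConnectedComponent.exact hc))
  · intro c'
    induction c' using SimpleGraph.ConnectedComponent.ind with
    | _ v => exact ⟨(edgeGraph ends A).connectedComponentMk v, rfl⟩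

lemma kc_insert_eq {e : E} {a b : V} (hab : ends e = s(a, b))
    (h : (edgeGraph ends A).Reachable a b) : kc ends (insert e A) = kc ends A := by
  apply kc_eq_of_reachable_imp ends (Finset.subset_insert e A)
  intro u v hr
  rcases (reachable_insert_iff ends hab).mp hr with h1 | ⟨h1, h2⟩ | ⟨h1, h2⟩
  · exact h1
  · exact (h1.trans h).trans h2
  · exact (h1.trans h.symm).trans h2

lemma kc_insert_add_one {e : E} {a b : V} (hab : ends e = s(a, b))
    (h : ¬ (edgeGraph ends A).Reachable a b) :
    kc ends A = kc ends (insert e A) + 1 := by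
  classical
  set G := edgeGraph ends A
  set G' := edgeGraph ends (insert e A)
  have hne : a ≠ b := by rintro rfl; exact h (SimpleGraph.Reachable.refl a)
  set φ : G.ConnectedComponent → G'.ConnectedComponent :=
    SimpleGraph.ConnectedComponent.map
      (SimpleGraph.Hom.ofLE (edgeGraph_mono ends (Finset.subset_insert e A)))
  have hφ : ∀ v : V, φ (G.connectedComponentMk v) = G'.connectedComponentMk v := fun v => rfl
  set cb := G.connectedComponentMk b
  -- θ : components not equal to cb ↔ components of G'
  have key : ∀ u v : V, φ (G.connectedComponentMk u) = φ (G.connectedComponentMk v) →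
      G.Reachable u v ∨ (G.Reachable u a ∧ G.Reachable b v) ∨
        (G.Reachable u b ∧ G.Reachable a v) := by
    intro u v hc
    rw [hφ, hφ] at hc
    exact (reachable_insert_iff ends hab).mp (SimpleGraph.ConnectedComponent.exact hc)
  have hbij : Function.Bijective
      (fun z : {z : G.ConnectedComponent // z ≠ cb} => φ z.1) := by
    constructor
    · rintro ⟨z₁, hz₁⟩ ⟨z₂, hz₂⟩ hc
      induction z₁ using SimpleGraph.ConnectedComponent.ind with
      | _ u =>
        induction z₂ using SimpleGraph.ConnectedComponent.ind with
        | _ v =>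
          simp only at hc
          rcases key u v hc with h1 | ⟨h1, h2⟩ | ⟨h1, h2⟩
          · exact Subtype.ext (SimpleGraph.ConnectedComponent.sound h1)
          · exact absurd (SimpleGraph.ConnectedComponent.sound h2.symm) hz₂
          · exact absurd (SimpleGraph.ConnectedComponent.sound h1) hz₁
    · intro c'
      induction c' using SimpleGraph.ConnectedComponent.ind with
      | _ v =>
        by_cases hv : G.connectedComponentMk v = cb
        · refine ⟨⟨G.connectedComponentMk a, ?_⟩, ?_⟩
          · intro hc
            exact h (SimpleGraph.ConnectedComponent.exact hc)
          · have h1 : φ (G.connectedComponentMk a) = φ cb := by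
              rw [hφ, hφ]
              apply SimpleGraph.ConnectedComponent.sound
              exact SimpleGraph.Adj.reachable ⟨hne, e, Finset.mem_insert_self e A, hab⟩
            simp only
            rw [h1, ← hv, hφ]
        · exact ⟨⟨G.connectedComponentMk v, hv⟩, rfl⟩
  have h1 : Nat.card {z : G.ConnectedComponent // z ≠ cb} = kc ends (insert e A) :=
    Nat.card_eq_of_bijective _ hbij
  have h2 : Nat.card G.ConnectedComponent =
      Nat.card (Option {z : G.ConnectedComponent // z ≠ cb}) :=
    (Nat.card_eq_of_bijective _ (Equiv.optionSubtypeNe cb).bijective).symm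
  rw [Finite.card_option, h1] at h2
  exact h2

lemma kc_insert_le (e : E) (A : Finset E) : kc ends (insert e A) ≤ kc ends A :=
  kc_le_of_subset ends (Finset.subset_insert e A)

lemma kc_le_insert (e : E) (A : Finset E) : kc ends A ≤ kc ends (insert e A) + 1 := by
  obtain ⟨a, b, hab⟩ := ends_exists ends e
  by_cases h : (edgeGraph ends A).Reachable a b
  · rw [kc_insert_eq ends hab h]; omega
  · rw [kc_insert_add_one ends hab h]

lemma kc_empty : kc ends (∅ : Finset E) = Fintype.card V := by
  rw [← Nat.card_eq_fintype_card]
  apply (Nat.card_eq_of_bijective (edgeGraph ends ∅).connectedComponentMk ?_).symm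
  constructor
  · intro u v hc
    have := SimpleGraph.ConnectedComponent.exact hc
    obtain ⟨w⟩ := this
    cases w with
    | nil => rfl
    | cons hadj p => exact absurd hadj.2.choose_spec.1 (by simp)
  · intro c
    induction c using SimpleGraph.ConnectedComponent.ind with
    | _ v => exact ⟨v, rfl⟩

lemma le_card_add_kc (A : Finset E) : Fintype.card V ≤ A.card + kc ends A := by
  classical
  induction A using Finset.induction with
  | empty => rw [kc_empty]; simp
  | @insert e A he ih =>
    have := kc_le_insert ends e A
    rw [Finset.card_insert_of_notMem he]
    omega

lemma kc_le_union_add_card (A C : Finset E) : kc ends A ≤ kc ends (A ∪ C) + C.card := by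
  classical
  induction C using Finset.induction with
  | empty => simp
  | @insert e C he ih =>
    have h1 : A ∪ insert e C = insert e (A ∪ C) := Finset.union_insert _ _ _
    have h2 := kc_le_insert ends e (A ∪ C)
    rw [h1, Finset.card_insert_of_notMem he]
    omega

lemma kc_union_eq_of_reachable (C : Finset E)
    (h : ∀ x ∈ C, ∀ a b : V, ends x = s(a, b) → (edgeGraph ends A).Reachable a b) :
    kc ends (A ∪ C) = kc ends A := by
  apply kc_eq_of_reachable_imp ends Finset.subset_union_left
  intro u v hr
  obtain ⟨w⟩ := hr
  induction w with
  | nil => exact SimpleGraph.Reachable.refl _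
  | @cons x y z hadj p ih =>
    obtain ⟨hxy, e', he', hs⟩ := hadj
    rcases Finset.mem_union.mp he' with he'A | he'C
    · have hadjA : (edgeGraph ends A).Adj x y := ⟨hxy, e', he'A, hs⟩
      exact hadjA.reachable.trans ih
    · exact (h e' he'C x y hs).trans ih

end Graph

section Matroid

variable {V E : Type} [DecidableEq E] (ends : E → Sym2 V) [Fintype V] [Fintype E] {A B : Finset E}

/-- Independence: the edge set is a forest. -/
def Indep (A : Finset E) : Prop := A.card + kc ends A = Fintype.card V

lemma indep_empty : Indep (V := V) ends (∅ : Finset E) := by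
  simp [Indep, kc_empty]

lemma indep_subset (h : B ⊆ A) (hA : Indep ends A) : Indep ends B := by
  have h1 := le_card_add_kc ends B
  have h2 := kc_le_union_add_card ends B (A \ B)
  have h3 : B ∪ (A \ B) = A := Finset.union_sdiff_of_subset h
  have h4 : B.card + (A \ B).card = A.card := by
    rw [Finset.card_sdiff_of_subset h]
    have := Finset.card_le_card h
    omega
  rw [h3] at h2
  unfold Indep at *
  omega

lemma not_indep_superset (h : B ⊆ A) (hB : ¬ Indep ends B) : ¬ Indep ends A :=
  fun hA => hB (indep_subset ends h hA)

lemma indep_insert_of_kc_lt {e : E} (hA : Indep ends A) (he : e ∉ A)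
    (hlt : kc ends (insert e A) < kc ends A) : Indep ends (insert e A) := by
  have h1 := le_card_add_kc ends (insert e A)
  have h2 : (insert e A).card = A.card + 1 := Finset.card_insert_of_notMem he
  unfold Indep at *
  omega

lemma kc_insert_eq_of_not_indep {e : E} (hA : Indep ends A)
    (hmax : e ∈ A ∨ ¬ Indep ends (insert e A)) : kc ends (insert e A) = kc ends A := by
  rcases hmax with he | hmax
  · rw [Finset.insert_eq_self.mpr he]
  · by_cases he : e ∈ A
    · rw [Finset.insert_eq_self.mpr he]
    have h1 := kc_insert_le ends e A
    rcases lt_or_eq_of_le h1 with hlt | heq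
    · exact absurd (indep_insert_of_kc_lt ends hA he hlt) hmax
    · exact heq

lemma reach_of_kc_insert_eq {e : E} (h : kc ends (insert e A) = kc ends A)
    {a b : V} (hab : ends e = s(a, b)) : (edgeGraph ends A).Reachable a b := by
  by_contra hr
  have := kc_insert_add_one ends hab hr
  omega

lemma base_iff_maximal :
    IsSpanningForest ends B ↔ Indep ends B ∧ ∀ f ∉ B, ¬ Indep ends (insert f B) := by
  constructor
  · rintro ⟨h1, h2⟩
    refine ⟨h1, fun f hf hind => ?_⟩
    have hc : (insert f B).card = B.card + 1 := Finset.card_insert_of_notMem hf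
    have h3 : kc ends Finset.univ ≤ kc ends (insert f B) :=
      kc_le_of_subset ends (Finset.subset_univ _)
    unfold Indep at hind
    omega
  · rintro ⟨h1, h2⟩
    refine ⟨h1, ?_⟩
    have hkc : kc ends (B ∪ Finset.univ) = kc ends B := by
      apply kc_union_eq_of_reachable
      intro x _ a b hab
      apply reach_of_kc_insert_eq ends ?_ hab
      apply kc_insert_eq_of_not_indep ends h1
      by_cases hx : x ∈ B
      · exact Or.inl hx
      · exact Or.inr (h2 x hx)
    have huniv : B ∪ Finset.univ = Finset.univ := by
      apply Finset.Subset.antisymm (Finset.subset_univ _) Finset.subset_union_right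
    rw [← huniv, hkc]

lemma spanningForest_indep (h : IsSpanningForest ends B) : Indep ends B := h.1

lemma card_swapEdge {e f : E} (he : e ∈ B) (hf : f ∉ B) :
    (swapEdge B e f).card = B.card := by
  unfold swapEdge
  rw [Finset.card_insert_of_notMem (fun hmem => hf (Finset.mem_of_mem_erase hmem)),
    Finset.card_erase_of_mem he]
  have : 1 ≤ B.card := Finset.card_pos.mpr ⟨e, he⟩
  omega

lemma swap_base_iff_indep {e f : E} (hB : IsSpanningForest ends B)
    (he : e ∈ B) (hf : f ∉ B) :
    IsSpanningForest ends (swapEdge B e f) ↔ Indep ends (swapEdge B e f) := by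
  constructor
  · exact fun h => h.1
  · intro h
    refine ⟨h, ?_⟩
    obtain ⟨h1, h2⟩ := hB
    have hc := card_swapEdge (B := B) (e := e) (f := f) he hf
    unfold Indep at h
    omega

lemma exists_maximal_indep_between (P Q : Finset E) (hP : Indep ends P) (hPQ : P ⊆ Q) :
    ∃ T, P ⊆ T ∧ T ⊆ Q ∧ Indep ends T ∧ ∀ x ∈ Q, x ∉ T → ¬ Indep ends (insert x T) := by
  classical
  set s := Q.powerset.filter (fun T => P ⊆ T ∧ Indep ends T) with hs
  have hne : s.Nonempty := ⟨P, by simp [hs, Finset.mem_powerset, hPQ, hP]⟩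
  obtain ⟨T, hT, hmax⟩ := Finset.exists_max_image s Finset.card hne
  simp only [hs, Finset.mem_filter, Finset.mem_powerset] at hT
  refine ⟨T, hT.2.1, hT.1, hT.2.2, ?_⟩
  intro x hxQ hxT hind
  have hmem : insert x T ∈ s := by
    simp only [hs, Finset.mem_filter, Finset.mem_powerset]
    exact ⟨Finset.insert_subset hxQ hT.1, hT.2.1.trans (Finset.subset_insert x T), hind⟩
  have := hmax _ hmem
  rw [Finset.card_insert_of_notMem hxT] at this
  omega

/-- Exchange: if `B` is a base, `f ∉ B`, `P ⊆ B` and `P + f` is independent, then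
some `e ∈ B \ P` can be swapped out for `f`. -/
lemma exchange {f : E} (hB : IsSpanningForest ends B) (hf : f ∉ B)
    (P : Finset E) (hPB : P ⊆ B) (hPf : Indep ends (insert f P)) :
    ∃ e ∈ B, e ∉ P ∧ IsSpanningForest ends (swapEdge B e f) := by
  classical
  obtain ⟨T, hT1, hT2, hT3, hT4⟩ := exists_maximal_indep_between ends (insert f P) (insert f B)
    hPf (Finset.insert_subset_insert f hPB)
  -- kc T = kc univ
  have hkuniv : kc ends Finset.univ ≤ kc ends (insert f B) :=
    kc_le_of_subset ends (Finset.subset_univ _)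
  have hkB : kc ends (insert f B) ≤ kc ends B := kc_insert_le ends f B
  have hkT : kc ends T = kc ends (insert f B) := by
    have : kc ends (T ∪ insert f B) = kc ends T := by
      apply kc_union_eq_of_reachable
      intro x hx a b hab
      apply reach_of_kc_insert_eq ends ?_ hab
      apply kc_insert_eq_of_not_indep ends hT3
      by_cases hxT : x ∈ T
      · exact Or.inl hxT
      · exact Or.inr (hT4 x hx hxT)
    have hun : T ∪ insert f B = insert f B := Finset.union_eq_right.mpr hT2
    rw [hun] at this
    exact this.symm
  have hkBuniv : kc ends B = kc ends Finset.univ := hB.2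
  have hkTuniv : kc ends T = kc ends Finset.univ := by omega
  -- card T = card B
  have hcT : T.card = B.card := by
    have h1 : T.card + kc ends T = Fintype.card V := hT3
    have h2 : B.card + kc ends B = Fintype.card V := hB.1
    omega
  have hfT : f ∈ T := hT1 (Finset.mem_insert_self f P)
  -- B \ (T.erase f) is a singleton
  set T' := T.erase f with hT'
  have hT'B : T' ⊆ B := by
    intro x hx
    have hx1 : x ∈ T := Finset.mem_of_mem_erase hx
    have hx2 : x ≠ f := Finset.ne_of_mem_erase hx
    rcases Finset.mem_insert.mp (hT2 hx1) with h | h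
    · exact absurd h hx2
    · exact h
  have hcT' : T'.card = B.card - 1 := by
    rw [hT', Finset.card_erase_of_mem hfT, hcT]
  have hcB : 1 ≤ B.card := by
    by_contra hc
    have : B.card = 0 := by omega
    have : B = ∅ := Finset.card_eq_zero.mp this
    subst this
    have : T' ⊆ (∅ : Finset E) := hT'B
    have hT'e : T' = ∅ := Finset.subset_empty.mp this
    have : T = insert f T' := by
      rw [hT']
      exact (Finset.insert_erase hfT).symm
    rw [this, hT'e] at hcT
    simp at hcT
  have hsd : (B \ T').card = 1 := by
    rw [Finset.card_sdiff_of_subset hT'B]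
    omega
  obtain ⟨e, he⟩ := Finset.card_eq_one.mp hsd
  have heB : e ∈ B := by
    have : e ∈ B \ T' := by rw [he]; exact Finset.mem_singleton_self e
    exact (Finset.mem_sdiff.mp this).1
  have heT' : e ∉ T' := by
    have : e ∈ B \ T' := by rw [he]; exact Finset.mem_singleton_self e
    exact (Finset.mem_sdiff.mp this).2
  have hT'eq : T' = B.erase e := by
    apply Finset.Subset.antisymm
    · intro x hx
      refine Finset.mem_erase.mpr ⟨?_, hT'B hx⟩
      rintro rfl
      exact heT' hx
    · intro x hx
      obtain ⟨hxe, hxB⟩ := Finset.mem_erase.mp hx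
      by_contra hxT'
      have : x ∈ B \ T' := Finset.mem_sdiff.mpr ⟨hxB, hxT'⟩
      rw [he] at this
      exact hxe (Finset.mem_singleton.mp this)
  have hTeq : T = swapEdge B e f := by
    unfold swapEdge
    rw [← hT'eq, hT']
    exact (Finset.insert_erase hfT).symm
  have heP : e ∉ P := by
    intro hP
    have : e ∈ T := hT1 (Finset.mem_insert_of_mem hP)
    have : e ∈ T' := Finset.mem_erase.mpr ⟨fun h => hf (h ▸ heB), this⟩
    exact heT' this
  refine ⟨e, heB, heP, ?_⟩
  rw [← hTeq]
  exact ⟨hT3, by omega⟩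

end Matroid

section Order

variable {E : Type} [LinearOrder E]

/-- The scan order used by the greedy algorithm: elements of `S` first, in increasing
order, then elements outside `S` in decreasing order. -/
def prec (S : Finset E) (x y : E) : Prop :=
  (x ∈ S ∧ y ∉ S) ∨ (x ∈ S ∧ y ∈ S ∧ x < y) ∨ (x ∉ S ∧ y ∉ S ∧ y < x)

lemma prec_irrefl (S : Finset E) (x : E) : ¬ prec S x x := by
  unfold prec; intro h; rcases h with ⟨h1, h2⟩ | ⟨_, _, h⟩ | ⟨_, _, h⟩
  · exact h2 h1
  all_goals exact lt_irrefl x h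

lemma prec_asymm {S : Finset E} {x y : E} (h : prec S x y) : ¬ prec S y x := by
  unfold prec at *
  rcases h with ⟨h1, h2⟩ | ⟨h1, h2, h3⟩ | ⟨h1, h2, h3⟩ <;>
    rintro (⟨g1, g2⟩ | ⟨g1, g2, g3⟩ | ⟨g1, g2, g3⟩) <;>
    first
      | exact h2 g1 | exact g2 h1 | exact h1 g1 | exact g1 h1
      | exact absurd rfl (ne_of_lt (h3.trans g3))

lemma prec_trans {S : Finset E} {x y z : E} (h1 : prec S x y) (h2 : prec S y z) :
    prec S x z := by
  unfold prec at *
  rcases h1 with ⟨a1, a2⟩ | ⟨a1, a2, a3⟩ | ⟨a1, a2, a3⟩ <;>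
    rcases h2 with ⟨b1, b2⟩ | ⟨b1, b2, b3⟩ | ⟨b1, b2, b3⟩ <;>
    first
      | (exact absurd b1 a2) | (exact absurd a2 b2) | (exact absurd b1 a1)
      | (exact absurd a1 b1)
      | (exact Or.inl ⟨a1, b2⟩)
      | (exact Or.inr (Or.inl ⟨a1, b2, a3.trans b3⟩))
      | (exact Or.inr (Or.inr ⟨a1, b2, b3.trans a3⟩))

lemma prec_total {S : Finset E} {x y : E} (h : x ≠ y) : prec S x y ∨ prec S y x := by
  unfold prec
  by_cases hx : x ∈ S <;> by_cases hy : y ∈ S <;>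
    rcases lt_or_gt_of_ne h with hlt | hlt <;> tauto

/-- The reflexive closure of `prec`, as a total preorder suitable for `Finset.sort`. -/
def precle (S : Finset E) (x y : E) : Prop := prec S x y ∨ x = y

instance precle.isTrans (S : Finset E) : IsTrans E (precle S) where
  trans := by
    rintro a b c (h1 | rfl) (h2 | rfl)
    · exact Or.inl (prec_trans h1 h2)
    · exact Or.inl h1
    · exact Or.inl h2
    · exact Or.inr rfl

instance precle.isAntisymm (S : Finset E) : IsAntisymm E (precle S) where
  antisymm := by
    rintro a b (h1 | rfl) (h2 | h) <;> first | rfl | skip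
    · exact absurd h2 (prec_asymm h1)
    · exact h.symm

instance precle.isTotal (S : Finset E) : IsTotal E (precle S) where
  total := by
    intro a b
    by_cases h : a = b
    · exact Or.inl (Or.inr h)
    · rcases prec_total (S := S) h with h1 | h1
      · exact Or.inl (Or.inl h1)
      · exact Or.inr (Or.inl h1)

lemma exists_prec_min {S s : Finset E} (hs : s.Nonempty) :
    ∃ m ∈ s, ∀ x ∈ s, x ≠ m → prec S m x := by
  classical
  set l := s.sort (precle S) with hl
  have hsorted : l.Pairwise (precle S) := Finset.pairwise_sort _ _
  have hmem : ∀ x, x ∈ l ↔ x ∈ s := fun x => Finset.mem_sort _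
  cases hcl : l with
  | nil =>
    obtain ⟨x, hx⟩ := hs
    rw [← hmem x, hcl] at hx
    exact absurd hx (List.not_mem_nil)
  | cons m t =>
    refine ⟨m, by rw [← hmem m, hcl]; exact List.mem_cons_self, ?_⟩
    intro x hx hne
    rw [← hmem x, hcl] at hx
    rcases List.mem_cons.mp hx with rfl | hxt
    · exact absurd rfl hne
    · rw [hcl] at hsorted
      rcases (List.pairwise_cons.mp hsorted).1 x hxt with h | h
      · exact h
      · exact absurd h.symm hne

end Order

section Greedy

variable {V E : Type} [Fintype V] [Fintype E] [DecidableEq E] [LinearOrder E]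
  (ends : E → Sym2 V)

noncomputable def greedyAux : List E → Finset E → Finset E
  | [], T => T
  | x :: l, T => greedyAux l (if Indep (V := V) ends (insert x T) then insert x T else T)

lemma greedyAux_subset : ∀ (l : List E) (T : Finset E), T ⊆ greedyAux ends l T := by
  intro l
  induction l with
  | nil => intro T; exact Finset.Subset.refl T
  | cons x l ih =>
    intro T
    show T ⊆ greedyAux ends l _
    by_cases h : Indep (V := V) ends (insert x T)
    · simp only [h, if_true]
      exact (Finset.subset_insert x T).trans (ih _)
    · simp only [h, if_false]
      exact ih T

lemma greedyAux_mem (l : List E) (T : Finset E) :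
    ∀ x ∈ greedyAux ends l T, x ∈ T ∨ x ∈ l := by
  induction l generalizing T with
  | nil => intro x hx; exact Or.inl hx
  | cons y l ih =>
    intro x hx
    show x ∈ T ∨ x ∈ y :: l
    have hx' : x ∈ greedyAux ends l (if Indep (V := V) ends (insert y T) then insert y T else T) := hx
    rcases ih _ x hx' with h | h
    · by_cases hc : Indep (V := V) ends (insert y T)
      · simp only [hc, if_true] at h
        rcases Finset.mem_insert.mp h with rfl | h
        · exact Or.inr (List.mem_cons_self)
        · exact Or.inl h
      · simp only [hc, if_false] at h
        exact Or.inl h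
    · exact Or.inr (List.mem_cons_of_mem y h)

lemma greedyAux_indep (l : List E) (T : Finset E) (hT : Indep (V := V) ends T) :
    Indep (V := V) ends (greedyAux ends l T) := by
  induction l generalizing T with
  | nil => exact hT
  | cons x l ih =>
    show Indep ends (greedyAux ends l _)
    by_cases h : Indep (V := V) ends (insert x T)
    · simp only [h, if_true]; exact ih _ h
    · simp only [h, if_false]; exact ih _ hT

lemma greedyAux_key (S : Finset E) :
    ∀ (l : List E) (T : Finset E), l.Pairwise (prec S) →
      (∀ x ∈ T, ∀ y ∈ l, prec S x y) →
      ∀ f ∈ l, f ∉ greedyAux ends l T →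
        ¬ Indep (V := V) ends
          (insert f ((greedyAux ends l T).filter (fun x => prec S x f))) := by
  intro l
  induction l with
  | nil => intro T _ _ f hf; exact absurd hf (List.not_mem_nil)
  | cons y l ih =>
    intro T hpair hbefore f hf hfG
    have hpair' : l.Pairwise (prec S) := (List.pairwise_cons.mp hpair).2
    have hhead : ∀ z ∈ l, prec S y z := (List.pairwise_cons.mp hpair).1
    by_cases hc : Indep (V := V) ends (insert y T)
    · -- y is added
      have hG : greedyAux ends (y :: l) T = greedyAux ends l (insert y T) := by
        show greedyAux ends l _ = _
        simp only [hc, if_true]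
      rcases List.mem_cons.mp hf with rfl | hfl
      · exfalso
        apply hfG
        rw [hG]
        exact greedyAux_subset ends l (insert f T) (Finset.mem_insert_self f T)
      · rw [hG] at hfG ⊢
        apply ih (insert y T) hpair' ?_ f hfl hfG
        intro x hx z hz
        rcases Finset.mem_insert.mp hx with rfl | hxT
        · exact hhead z hz
        · exact hbefore x hxT z (List.mem_cons_of_mem y hz)
    · -- y is rejected
      have hG : greedyAux ends (y :: l) T = greedyAux ends l T := by
        show greedyAux ends l _ = _
        simp only [hc, if_false]
      rcases List.mem_cons.mp hf with rfl | hfl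
      · -- f = y : show the filtered set is exactly T
        rw [hG]
        have hfilter : (greedyAux ends l T).filter (fun x => prec S x f) = T := by
          apply Finset.Subset.antisymm
          · intro x hx
            obtain ⟨hxG, hxf⟩ := Finset.mem_filter.mp hx
            rcases greedyAux_mem ends l T x hxG with h | h
            · exact h
            · exact absurd hxf (prec_asymm (hhead x h))
          · intro x hx
            refine Finset.mem_filter.mpr ⟨greedyAux_subset ends l T hx, ?_⟩
            exact hbefore x hx f (List.mem_cons_self)
        rw [hfilter]
        exact hc
      · rw [hG] at hfG ⊢
        apply ih T hpair' ?_ f hfl hfG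
        intro x hx z hz
        exact hbefore x hx z (List.mem_cons_of_mem y hz)

/-- `B` is the result of the greedy algorithm along the scan order determined by `S`. -/
def GreedyBase (S B : Finset E) : Prop :=
  ∀ f ∉ B, ¬ Indep (V := V) ends (insert f (B.filter (fun x => prec S x f)))

lemma exists_greedyBase (S : Finset E) :
    ∃ B : Finset E, IsSpanningForest ends B ∧ GreedyBase ends S B := by
  set l := Finset.univ.sort (precle S) with hl
  have hsorted : l.Pairwise (precle S) := Finset.pairwise_sort _ _
  have hnodup : l.Nodup := Finset.sort_nodup _ _
  have hmem : ∀ x : E, x ∈ l := fun x => (Finset.mem_sort _).mpr (Finset.mem_univ x)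
  have hpair : l.Pairwise (prec S) := by
    have := hsorted.and hnodup
    exact this.imp (fun h => h.1.resolve_right h.2)
  set B := greedyAux ends l ∅ with hB
  have hindep : Indep (V := V) ends B := greedyAux_indep ends l ∅ (indep_empty ends)
  have hkey : ∀ f ∉ B, ¬ Indep (V := V) ends
      (insert f (B.filter (fun x => prec S x f))) := by
    intro f hf
    exact greedyAux_key ends S l ∅ hpair (by simp) f (hmem f) hf
  refine ⟨B, ?_, hkey⟩
  rw [base_iff_maximal]
  refine ⟨hindep, ?_⟩
  intro f hf
  apply not_indep_superset ends ?_ (hkey f hf)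
  apply Finset.insert_subset_insert
  exact Finset.filter_subset _ _

lemma greedyBase_unique_aux {S B B' : Finset E} (hB' : IsSpanningForest ends B')
    (hG : GreedyBase ends S B) {g : E} (hgB : g ∉ B) (hgB' : g ∈ B')
    (hagree : ∀ x, prec S x g → (x ∈ B ↔ x ∈ B')) : False := by
  have hfilter : B.filter (fun x => prec S x g) = B'.filter (fun x => prec S x g) := by
    ext x
    simp only [Finset.mem_filter]
    constructor
    · rintro ⟨h1, h2⟩; exact ⟨(hagree x h2).mp h1, h2⟩
    · rintro ⟨h1, h2⟩; exact ⟨(hagree x h2).mpr h1, h2⟩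
  have hsub : insert g (B'.filter (fun x => prec S x g)) ⊆ B' :=
    Finset.insert_subset hgB' (Finset.filter_subset _ _)
  have hindep : Indep ends (insert g (B'.filter (fun x => prec S x g))) :=
    indep_subset ends hsub (spanningForest_indep ends hB')
  rw [← hfilter] at hindep
  exact hG g hgB hindep

lemma greedyBase_unique {S B B' : Finset E}
    (hB : IsSpanningForest ends B) (hB' : IsSpanningForest ends B')
    (hG : GreedyBase ends S B) (hG' : GreedyBase ends S B') : B = B' := by
  by_contra hne
  set D := (B \ B') ∪ (B' \ B) with hD
  have hDne : D.Nonempty := by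
    rw [Finset.nonempty_iff_ne_empty]
    intro hempty
    apply hne
    have h1 : B \ B' = ∅ := by
      rw [← Finset.subset_empty, ← hempty]
      exact Finset.subset_union_left
    have h2 : B' \ B = ∅ := by
      rw [← Finset.subset_empty, ← hempty]
      exact Finset.subset_union_right
    exact Finset.Subset.antisymm
      (fun x hx => by
        by_contra hx'
        exact absurd (Finset.mem_sdiff.mpr ⟨hx, hx'⟩) (by rw [h1]; simp))
      (fun x hx => by
        by_contra hx'
        exact absurd (Finset.mem_sdiff.mpr ⟨hx, hx'⟩) (by rw [h2]; simp))
  obtain ⟨m, hmD, hmin⟩ := exists_prec_min (S := S) hDne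
  have hagree : ∀ x, prec S x m → (x ∈ B ↔ x ∈ B') := by
    intro x hx
    by_contra hiff
    have hxD : x ∈ D := by
      rw [hD, Finset.mem_union, Finset.mem_sdiff, Finset.mem_sdiff]
      by_cases h1 : x ∈ B <;> by_cases h2 : x ∈ B' <;> tauto
    have hxm : x ≠ m := by rintro rfl; exact prec_irrefl S x hx
    exact prec_asymm (hmin x hxD hxm) hx
  rcases Finset.mem_union.mp hmD with hm | hm
  · obtain ⟨hm1, hm2⟩ := Finset.mem_sdiff.mp hm
    exact greedyBase_unique_aux ends hB hG' hm2 hm1 (fun x hx => (hagree x hx).symm)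
  · obtain ⟨hm1, hm2⟩ := Finset.mem_sdiff.mp hm
    exact greedyBase_unique_aux ends hB' hG hm2 hm1 hagree

end Greedy

section Activity

variable {V E : Type} [Fintype V] [Fintype E] [DecidableEq E] [LinearOrder E]
  (ends : E → Sym2 V)

lemma not_prec_of_internal {S : Finset E} {e f : E} (he : e ∉ S) (hef : e < f) :
    ¬ prec S e f := by
  rintro (⟨h1, h2⟩ | ⟨h1, h2, h3⟩ | ⟨h1, h2, h3⟩)
  · exact he h1
  · exact he h1
  · exact absurd rfl (ne_of_lt (hef.trans h3))

lemma not_prec_of_external {S : Finset E} {e f : E} (hf : f ∈ S) (hfe : f < e) :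
    ¬ prec S e f := by
  rintro (⟨h1, h2⟩ | ⟨h1, h2, h3⟩ | ⟨h1, h2, h3⟩)
  · exact h2 hf
  · exact absurd rfl (ne_of_lt (hfe.trans h3))
  · exact h2 hf

lemma filter_subset_erase {S B : Finset E} {e f : E} (hnp : ¬ prec S e f) :
    B.filter (fun x => prec S x f) ⊆ B.erase e := by
  intro x hx
  obtain ⟨hxB, hxp⟩ := Finset.mem_filter.mp hx
  refine Finset.mem_erase.mpr ⟨?_, hxB⟩
  rintro rfl
  exact hnp hxp

lemma greedyBase_internallyActive {S B : Finset E} (hG : GreedyBase ends S B) :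
    ∀ e ∈ B, e ∉ S → InternallyActive ends B e := by
  intro e heB heS
  refine ⟨heB, ?_⟩
  rintro ⟨f, hfB, hef, hswap⟩
  have hindep : Indep ends (insert f (B.erase e)) := hswap.1
  apply hG f hfB
  apply indep_subset ends ?_ hindep
  exact Finset.insert_subset_insert f (filter_subset_erase (not_prec_of_internal heS hef)) |>.trans
    (Finset.Subset.refl _)

lemma greedyBase_externallyActive {S B : Finset E} (hG : GreedyBase ends S B) :
    ∀ f ∈ S, f ∉ B → ExternallyActive ends B f := by
  intro f hfS hfB
  refine ⟨hfB, ?_⟩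
  rintro ⟨e, heB, hfe, hswap⟩
  have hindep : Indep ends (insert f (B.erase e)) := hswap.1
  apply hG f hfB
  apply indep_subset ends ?_ hindep
  exact Finset.insert_subset_insert f (filter_subset_erase (not_prec_of_external hfS hfe))

lemma activity_greedyBase {S B : Finset E} (hB : IsSpanningForest ends B)
    (hint : ∀ e ∈ B, e ∉ S → InternallyActive ends B e)
    (hext : ∀ f ∈ S, f ∉ B → ExternallyActive ends B f) :
    GreedyBase ends S B := by
  intro f hf hindep
  obtain ⟨e, heB, heP, hswap⟩ :=
    exchange ends hB hf (B.filter (fun x => prec S x f)) (Finset.filter_subset _ _) hindep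
  have hnp : ¬ prec S e f := fun hp => heP (Finset.mem_filter.mpr ⟨heB, hp⟩)
  have hef : e ≠ f := by rintro rfl; exact hf heB
  by_cases hfS : f ∈ S
  · rcases lt_or_gt_of_ne hef with hlt | hlt
    · -- e < f : e must be outside S (else prec), then internal activity of e is violated
      have heS : e ∉ S := by
        intro heS
        exact hnp (Or.inr (Or.inl ⟨heS, hfS, hlt⟩))
      exact (hint e heB heS).2 ⟨f, hf, hlt, hswap⟩
    · -- f < e : external activity of f is violated
      exact (hext f hfS hf).2 ⟨e, heB, hlt, hswap⟩
  · -- f ∉ S : e must be outside S, and then e < f, violating internal activity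
    have heS : e ∉ S := by
      intro heS
      exact hnp (Or.inl ⟨heS, hfS⟩)
    have hlt : e < f := by
      rcases lt_or_gt_of_ne hef with hlt | hlt
      · exact hlt
      · exact absurd (Or.inr (Or.inr ⟨heS, hfS, hlt⟩)) hnp
    exact (hint e heB heS).2 ⟨f, hf, hlt, hswap⟩

/-- The two activity conditions determining the base associated with an edge subset. -/
def ActiveBase (S B : Finset E) : Prop :=
  IsSpanningForest ends B ∧ (∀ e ∈ B, e ∉ S → InternallyActive ends B e) ∧
    (∀ f ∈ S, f ∉ B → ExternallyActive ends B f)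

lemma exists_activeBase (S : Finset E) : ∃ B : Finset E, ActiveBase ends S B := by
  obtain ⟨B, hB, hG⟩ := exists_greedyBase ends S
  exact ⟨B, hB, greedyBase_internallyActive ends hG, greedyBase_externallyActive ends hG⟩

lemma activeBase_unique {S B B' : Finset E} (h : ActiveBase ends S B)
    (h' : ActiveBase ends S B') : B = B' := by
  obtain ⟨h1, h2, h3⟩ := h
  obtain ⟨h1', h2', h3'⟩ := h'
  exact greedyBase_unique ends h1 h1' (activity_greedyBase ends h1 h2 h3)
    (activity_greedyBase ends h1' h2' h3')

/-- The base associated with an edge subset by the activity bijection. -/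
noncomputable def theBase (S : Finset E) : Finset E :=
  (exists_activeBase ends S).choose

lemma theBase_spec (S : Finset E) : ActiveBase ends S (theBase ends S) :=
  (exists_activeBase ends S).choose_spec

lemma theBase_eq {S B : Finset E} (h : ActiveBase ends S B) : theBase ends S = B :=
  activeBase_unique ends (theBase_spec ends S) h

lemma mem_intAct {B : Finset E} {e : E} :
    e ∈ intAct ends B ↔ InternallyActive ends B e := by
  unfold intAct
  simp only [Finset.mem_filter, Finset.mem_univ, true_and]

lemma mem_extAct {B : Finset E} {f : E} :
    f ∈ extAct ends B ↔ ExternallyActive ends B f := by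
  unfold extAct
  simp only [Finset.mem_filter, Finset.mem_univ, true_and]

lemma intAct_subset {B : Finset E} : intAct ends B ⊆ B :=
  fun _ hx => ((mem_intAct ends).mp hx).1

lemma extAct_not_mem {B : Finset E} {f : E} (hf : f ∈ extAct ends B) : f ∉ B :=
  ((mem_extAct ends).mp hf).1

lemma theBase_of_interval {F Ai Ae : Finset E} (hF : IsSpanningForest ends F)
    (hAi : Ai ⊆ intAct ends F) (hAe : Ae ⊆ extAct ends F) :
    theBase ends ((F \ Ai) ∪ Ae) = F := by
  apply theBase_eq
  refine ⟨hF, ?_, ?_⟩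
  · intro e heF heS
    have heAi : e ∈ Ai := by
      by_contra heAi
      exact heS (Finset.mem_union_left _ (Finset.mem_sdiff.mpr ⟨heF, heAi⟩))
    exact (mem_intAct ends).mp (hAi heAi)
  · intro f hfS hfF
    have hfAe : f ∈ Ae := by
      rcases Finset.mem_union.mp hfS with h | h
      · exact absurd (Finset.mem_sdiff.mp h).1 hfF
      · exact h
    exact (mem_extAct ends).mp (hAe hfAe)

lemma interval_recover_i {F Ai Ae : Finset E} (hAi : Ai ⊆ intAct ends F)
    (hAe : Ae ⊆ extAct ends F) : F \ ((F \ Ai) ∪ Ae) = Ai := by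
  ext x
  have h1 : x ∈ Ai → x ∈ F := fun h => intAct_subset ends (hAi h)
  have h2 : x ∈ Ae → x ∉ F := fun h => extAct_not_mem ends (hAe h)
  simp only [Finset.mem_sdiff, Finset.mem_union]
  tauto

lemma interval_recover_e {F Ai Ae : Finset E} (hAi : Ai ⊆ intAct ends F)
    (hAe : Ae ⊆ extAct ends F) : ((F \ Ai) ∪ Ae) \ F = Ae := by
  ext x
  have h1 : x ∈ Ai → x ∈ F := fun h => intAct_subset ends (hAi h)
  have h2 : x ∈ Ae → x ∉ F := fun h => extAct_not_mem ends (hAe h)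
  simp only [Finset.mem_sdiff, Finset.mem_union]
  tauto

lemma interval_union {F A : Finset E} : (F \ (F \ A)) ∪ (A \ F) = A := by
  ext x
  simp only [Finset.mem_union, Finset.mem_sdiff]
  by_cases h1 : x ∈ F <;> by_cases h2 : x ∈ A <;> tauto

end Activity


/-- Summation form of the activity bijection: for any function `f`
from edge subsets into a commutative monoid,
`∑_F ∑_{A_i ⊆ E_i(F)} ∑_{A_e ⊆ E_e(F)} f((A_f \ A_i) ∪ A_e) = ∑_{A ⊆ E} f(A)`. -/
theorem activity_sum_formula {V E M : Type} [Fintype V] [Fintype E] [DecidableEq E]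
    [LinearOrder E] [AddCommMonoid M] (ends : E → Sym2 V) (f : Finset E → M) :
    ∑ F ∈ Finset.univ.powerset.filter (IsSpanningForest ends),
        ∑ Ai ∈ (intAct ends F).powerset,
          ∑ Ae ∈ (extAct ends F).powerset, f ((F \ Ai) ∪ Ae) =
      ∑ A ∈ (Finset.univ : Finset E).powerset, f A := by
  have hmaps : ∀ A ∈ (Finset.univ : Finset E).powerset,
      theBase ends A ∈ Finset.univ.powerset.filter (IsSpanningForest ends) := by
    intro A _
    rw [Finset.mem_filter]
    exact ⟨Finset.mem_powerset.mpr (Finset.subset_univ _), (theBase_spec ends A).1⟩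
  rw [← Finset.sum_fiberwise_of_maps_to hmaps f]
  apply Finset.sum_congr rfl
  intro F hF
  have hFbase : IsSpanningForest ends F := (Finset.mem_filter.mp hF).2
  rw [← Finset.sum_product' (s := (intAct ends F).powerset) (t := (extAct ends F).powerset)
    (f := fun Ai Ae => f ((F \ Ai) ∪ Ae))]
  apply Finset.sum_bij'
    (i := fun p _ => (F \ p.1) ∪ p.2)
    (j := fun A _ => (F \ A, A \ F))
  · -- hi
    rintro ⟨Ai, Ae⟩ hp
    obtain ⟨hAi, hAe⟩ := Finset.mem_product.mp hp
    rw [Finset.mem_powerset] at hAi hAe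
    rw [Finset.mem_filter]
    refine ⟨Finset.mem_powerset.mpr (Finset.subset_univ _), ?_⟩
    exact theBase_of_interval ends hFbase hAi hAe
  · -- hj
    intro A hA
    have hth : theBase ends A = F := (Finset.mem_filter.mp hA).2
    obtain ⟨_, hint, hext⟩ := theBase_spec ends A
    rw [hth] at hint hext
    rw [Finset.mem_product, Finset.mem_powerset, Finset.mem_powerset]
    constructor
    · intro x hx
      obtain ⟨hx1, hx2⟩ := Finset.mem_sdiff.mp hx
      exact (mem_intAct ends).mpr (hint x hx1 hx2)
    · intro x hx
      obtain ⟨hx1, hx2⟩ := Finset.mem_sdiff.mp hx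
      exact (mem_extAct ends).mpr (hext x hx1 hx2)
  · -- left_inv
    rintro ⟨Ai, Ae⟩ hp
    obtain ⟨hAi, hAe⟩ := Finset.mem_product.mp hp
    rw [Finset.mem_powerset] at hAi hAe
    have h1 := interval_recover_i ends hAi hAe
    have h2 := interval_recover_e ends hAi hAe
    simp only [h1, h2]
  · -- right_inv
    intro A _
    simp only [interval_union]
  · -- values agree
    rintro ⟨Ai, Ae⟩ _
    rfl
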